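/- For N ≥ 2 and q ∈ (0, 1/2], the function f(ξ) = (S(ξ, q) − S(ξ, −q)) / (S(ξ, q) + S(ξ, −q)) is strictly monotonically increasing on (−q, q). -/

import Mathlib

open Real Set

noncomputable def S (N : ℕ) (q ξ : ℝ) : ℝ :=
  if Real.sin (π * (ξ - q) / N) = 0 then (N : ℝ) ^ 2
  else (Real.sin (π * (ξ - q))) ^ 2 / (Real.sin (π * (ξ - q) / N)) ^ 2

noncomputable def f (N : ℕ) (q ξ : ℝ) : ℝ :=
  (S N q ξ - S N (-q) ξ) / (S N q ξ + S N (-q) ξ)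

lemma g_pos (N : ℕ) (hN : 2 ≤ N) {a : ℝ} (ha : 0 < a) (ha' : a < π) :
    0 < Real.sin a * Real.cos (a / N) - (N : ℝ) * Real.cos a * Real.sin (a / N) := by
  have hN1 : (1:ℝ) ≤ N := by exact_mod_cast Nat.one_le_of_lt hN
  have hN2 : (2:ℝ) ≤ N := by exact_mod_cast hN
  have hN0 : (0:ℝ) < N := by linarith
  set g : ℝ → ℝ :=
    fun t => Real.sin t * Real.cos (t / N) - (N:ℝ) * (Real.cos t * Real.sin (t / N)) with hg
  have hd : ∀ t : ℝ, HasDerivAt g (((N:ℝ) - 1/N) * (Real.sin t * Real.sin (t / N))) t := by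
    intro t
    have h1 : HasDerivAt (fun t : ℝ => t / (N:ℝ)) (1 / N) t := by
      simpa using (hasDerivAt_id t).div_const (N:ℝ)
    have hs : HasDerivAt (fun t : ℝ => Real.sin (t / N)) (Real.cos (t / N) * (1/N)) t := h1.sin
    have hc : HasDerivAt (fun t : ℝ => Real.cos (t / N)) (-Real.sin (t / N) * (1/N)) t := h1.cos
    have h2 := ((Real.hasDerivAt_sin t).mul hc).sub
      (HasDerivAt.const_mul (N:ℝ) ((Real.hasDerivAt_cos t).mul hs))
    have hNne : (N:ℝ) ≠ 0 := ne_of_gt hN0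
    have heq : Real.cos t * Real.cos (t / N) + Real.sin t * (-Real.sin (t / N) * (1 / N)) -
        (N:ℝ) * (-Real.sin t * Real.sin (t / N) + Real.cos t * (Real.cos (t / N) * (1 / N)))
        = ((N:ℝ) - 1/N) * (Real.sin t * Real.sin (t / N)) := by
      field_simp
      ring
    rw [← heq]
    exact h2
  have hmono : StrictMonoOn g (Icc 0 π) := by
    apply strictMonoOn_of_deriv_pos (convex_Icc 0 π)
    · exact fun t _ => ((hd t).continuousAt).continuousWithinAt
    · intro t ht
      rw [interior_Icc] at ht
      rw [(hd t).deriv]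
      have h1 : 0 < Real.sin t := Real.sin_pos_of_pos_of_lt_pi ht.1 ht.2
      have h2 : 0 < Real.sin (t / N) := by
        apply Real.sin_pos_of_pos_of_lt_pi (div_pos ht.1 hN0)
        calc t / (N:ℝ) ≤ t := div_le_self ht.1.le hN1
        _ < π := ht.2
      have h3 : 1/(N:ℝ) ≤ 1 := by rw [div_le_one hN0]; linarith
      have h4 : 0 < (N:ℝ) - 1/N := by linarith
      exact mul_pos h4 (mul_pos h1 h2)
  have h0 : g 0 = 0 := by simp [hg]
  have hlt := hmono (left_mem_Icc.mpr (le_of_lt Real.pi_pos)) ⟨ha.le, ha'.le⟩ ha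
  rw [h0] at hlt
  simp only [hg] at hlt
  linarith

lemma hasDerivAt_S (N : ℕ) (hN : (N:ℝ) ≠ 0) (r x : ℝ) (h : Real.sin (π * (x - r) / N) ≠ 0) :
    HasDerivAt (fun ξ => S N r ξ)
      ((2 * Real.sin (π * (x - r)) * (Real.cos (π * (x - r)) * π) * (Real.sin (π * (x - r) / N)) ^ 2
        - (Real.sin (π * (x - r))) ^ 2 *
          (2 * Real.sin (π * (x - r) / N) * (Real.cos (π * (x - r) / N) * (π / N))))
        / ((Real.sin (π * (x - r) / N)) ^ 2) ^ 2) x := by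
  have h1 : HasDerivAt (fun ξ : ℝ => π * (ξ - r)) π x := by
    simpa using ((hasDerivAt_id x).sub_const r).const_mul π
  have h2 : HasDerivAt (fun ξ : ℝ => π * (ξ - r) / N) (π / N) x := h1.div_const N
  have hs1 : HasDerivAt (fun ξ : ℝ => (Real.sin (π * (ξ - r))) ^ 2)
      (2 * Real.sin (π * (x - r)) * (Real.cos (π * (x - r)) * π)) x := by
    have h := (h1.sin).pow 2
    norm_num at h
    exact h
  have hs2 : HasDerivAt (fun ξ : ℝ => (Real.sin (π * (ξ - r) / N)) ^ 2)
      (2 * Real.sin (π * (x - r) / N) * (Real.cos (π * (x - r) / N) * (π / N))) x := by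
    have h := (h2.sin).pow 2
    norm_num at h
    exact h
  have hdiv := hs1.div hs2 (pow_ne_zero 2 h)
  apply hdiv.congr_of_eventuallyEq
  have hc : ContinuousAt (fun ξ : ℝ => Real.sin (π * (ξ - r) / N)) x := by fun_prop
  filter_upwards [hc.eventually_ne h] with y hy
  simp only [S, if_neg hy, Pi.div_apply]

lemma deriv_pos_aux (n p sA cA sa ca sB cB sb cb : ℝ)
    (hp : 0 < p) (hn : 0 < n)
    (hsA : sA < 0) (hsa : sa < 0) (hsB : 0 < sB) (hsb : 0 < sb)
    (h1 : 0 < n * cA * sa - sA * ca) (h2 : 0 < sB * cb - n * cB * sb) :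
    0 < ((2 * sA * (cA * p) * sa ^ 2 - sA ^ 2 * (2 * sa * (ca * (p / n)))) / (sa ^ 2) ^ 2
          - (2 * sB * (cB * p) * sb ^ 2 - sB ^ 2 * (2 * sb * (cb * (p / n)))) / (sb ^ 2) ^ 2)
        * (sA ^ 2 / sa ^ 2 + sB ^ 2 / sb ^ 2)
        - (sA ^ 2 / sa ^ 2 - sB ^ 2 / sb ^ 2)
        * ((2 * sA * (cA * p) * sa ^ 2 - sA ^ 2 * (2 * sa * (ca * (p / n)))) / (sa ^ 2) ^ 2
          + (2 * sB * (cB * p) * sb ^ 2 - sB ^ 2 * (2 * sb * (cb * (p / n)))) / (sb ^ 2) ^ 2) := by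
  have hsa0 : sa ≠ 0 := ne_of_lt hsa
  have hsb0 : sb ≠ 0 := ne_of_gt hsb
  have hn0 : n ≠ 0 := ne_of_gt hn
  have key : ((2 * sA * (cA * p) * sa ^ 2 - sA ^ 2 * (2 * sa * (ca * (p / n)))) / (sa ^ 2) ^ 2
          - (2 * sB * (cB * p) * sb ^ 2 - sB ^ 2 * (2 * sb * (cb * (p / n)))) / (sb ^ 2) ^ 2)
        * (sA ^ 2 / sa ^ 2 + sB ^ 2 / sb ^ 2)
        - (sA ^ 2 / sa ^ 2 - sB ^ 2 / sb ^ 2)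
        * ((2 * sA * (cA * p) * sa ^ 2 - sA ^ 2 * (2 * sa * (ca * (p / n)))) / (sa ^ 2) ^ 2
          + (2 * sB * (cB * p) * sb ^ 2 - sB ^ 2 * (2 * sb * (cb * (p / n)))) / (sb ^ 2) ^ 2)
      = (4 * p * sA * sB) * (sB * sb * (n * cA * sa - sA * ca) + sA * sa * (sB * cb - n * cB * sb))
          / (n * sa ^ 3 * sb ^ 3) := by
    field_simp
    ring
  rw [key]
  have hbr : 0 < sB * sb * (n * cA * sa - sA * ca) + sA * sa * (sB * cb - n * cB * sb) :=
    add_pos (mul_pos (mul_pos hsB hsb) h1) (mul_pos (mul_pos_of_neg_of_neg hsA hsa) h2)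
  have h4 : 4 * p * sA * sB < 0 := by
    have := mul_neg_of_neg_of_pos hsA (show (0:ℝ) < 4 * p * sB by positivity)
    linarith [this]
  have hsa2 : 0 < sa ^ 2 := by nlinarith [mul_pos_of_neg_of_neg hsa hsa]
  have hsa3 : sa ^ 3 < 0 := by nlinarith [mul_neg_of_neg_of_pos hsa hsa2]
  have hsb3 : 0 < sb ^ 3 := by positivity
  apply div_pos_of_neg_of_neg
  · exact mul_neg_of_neg_of_pos h4 hbr
  · exact mul_neg_of_neg_of_pos (mul_neg_of_pos_of_neg hn hsa3) hsb3

theorem stmt_3 (N : ℕ) (hN : 2 ≤ N) (q : ℝ) (hq : 0 < q) (hq' : q ≤ 1 / 2) :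
    StrictMonoOn (fun ξ => f N q ξ) (Set.Ioo (-q) q) := by
  have hN1 : (1:ℝ) ≤ N := by exact_mod_cast Nat.one_le_of_lt hN
  have hN0 : (0:ℝ) < N := by linarith
  have hπ := Real.pi_pos
  have key : ∀ x ∈ Set.Ioo (-q) q, ∃ F, 0 < F ∧ HasDerivAt (fun ξ => f N q ξ) F x := by
    intro x hx
    obtain ⟨hx1, hx2⟩ := hx
    have hu1' : -π < π * (x - q) := by nlinarith
    have hu2' : π * (x - q) < 0 := by nlinarith
    have huN1 : -π < π * (x - q) / N := by
      have : π * (x - q) ≤ π * (x - q) / N := by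
        rw [le_div_iff₀ hN0]; nlinarith
      linarith
    have huN2 : π * (x - q) / N < 0 := div_neg_of_neg_of_pos hu2' hN0
    have hv1' : 0 < π * (x - -q) := by nlinarith
    have hv2' : π * (x - -q) < π := by nlinarith
    have hvN1 : 0 < π * (x - -q) / N := div_pos hv1' hN0
    have hvN2 : π * (x - -q) / N < π := lt_of_le_of_lt (div_le_self hv1'.le hN1) hv2'
    have hsA : Real.sin (π * (x - q)) < 0 := Real.sin_neg_of_neg_of_neg_pi_lt hu2' hu1'
    have hsa : Real.sin (π * (x - q) / N) < 0 := Real.sin_neg_of_neg_of_neg_pi_lt huN2 huN1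
    have hsB : 0 < Real.sin (π * (x - -q)) := Real.sin_pos_of_pos_of_lt_pi hv1' hv2'
    have hsb : 0 < Real.sin (π * (x - -q) / N) := Real.sin_pos_of_pos_of_lt_pi hvN1 hvN2
    have hsa0 : Real.sin (π * (x - q) / N) ≠ 0 := ne_of_lt hsa
    have hsb0 : Real.sin (π * (x - -q) / N) ≠ 0 := ne_of_gt hsb
    have h1 : 0 < (N:ℝ) * Real.cos (π * (x - q)) * Real.sin (π * (x - q) / N)
        - Real.sin (π * (x - q)) * Real.cos (π * (x - q) / N) := by
      have hg := g_pos N hN (a := -(π * (x - q))) (by linarith) (by linarith)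
      simp only [neg_div, Real.sin_neg, Real.cos_neg] at hg
      linarith
    have h2 : 0 < Real.sin (π * (x - -q)) * Real.cos (π * (x - -q) / N)
        - (N:ℝ) * Real.cos (π * (x - -q)) * Real.sin (π * (x - -q) / N) :=
      g_pos N hN hv1' hv2'
    have hA := hasDerivAt_S N (ne_of_gt hN0) q x hsa0
    have hB := hasDerivAt_S N (ne_of_gt hN0) (-q) x hsb0
    have hAval : S N q x = (Real.sin (π * (x - q))) ^ 2 / (Real.sin (π * (x - q) / N)) ^ 2 := by
      rw [S, if_neg hsa0]
    have hBval : S N (-q) x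
        = (Real.sin (π * (x - -q))) ^ 2 / (Real.sin (π * (x - -q) / N)) ^ 2 := by
      rw [S, if_neg hsb0]
    have hABpos : 0 < S N q x + S N (-q) x := by
      rw [hAval, hBval]
      have a1 : 0 ≤ (Real.sin (π * (x - q))) ^ 2 / (Real.sin (π * (x - q) / N)) ^ 2 := by
        positivity
      have a2 : 0 < (Real.sin (π * (x - -q))) ^ 2 / (Real.sin (π * (x - -q) / N)) ^ 2 :=
        div_pos (pow_pos hsB 2) (pow_pos hsb 2)
      linarith
    have hsum : S N q x + S N (-q) x ≠ 0 := ne_of_gt hABpos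
    have hF := (hA.sub hB).div (hA.add hB) hsum
    have hF' := hF.congr_of_eventuallyEq
      (Filter.Eventually.of_forall (fun y => by rfl) :
        (fun ξ => f N q ξ) =ᶠ[nhds x] fun y => (S N q y - S N (-q) y) / (S N q y + S N (-q) y))
    refine ⟨_, ?_, hF'⟩
    simp only [Pi.add_apply, Pi.sub_apply]
    rw [hAval, hBval]
    apply div_pos
    · exact deriv_pos_aux (N:ℝ) π _ _ _ _ _ _ _ _ hπ hN0 hsA hsa hsB hsb h1 h2
    · rw [hAval, hBval] at hABpos
      exact pow_pos hABpos 2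
  apply strictMonoOn_of_deriv_pos (convex_Ioo _ _)
  · intro x hx
    obtain ⟨F, _, hF⟩ := key x hx
    exact hF.continuousAt.continuousWithinAt
  · intro x hx
    rw [interior_Ioo] at hx
    obtain ⟨F, hFpos, hF⟩ := key x hx
    rw [hF.deriv]
    exact hFpos
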